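/- (Ascent property of the modified EM algorithm.) Let l_2 : ℝ^k → ℝ be arbitrary and define the modified profile log-likelihood l_mp(Θ) := l_1(Θ) − l_2(Θ), where l_1(Θ) := Σ_{u ∈ U} log Σ_{h ∈ H} q(Θ, u, h). If Θ'' satisfies Q(Θ'' | Θ') − l_2(Θ'') ≥ Q(Θ' | Θ') − l_2(Θ') (in particular, if Θ'' maximizes Θ ↦ Q(Θ | Θ') − l_2(Θ)), then l_mp(Θ'') ≥ l_mp(Θ'). Consequently the iterates of the modified EM algorithm produce a nondecreasing sequence l_mp(Θ^(0)) ≤ l_mp(Θ^(1)) ≤ l_mp(Θ^(2)) ≤ ⋯. -/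

import Mathlib

open Finset

private lemma gibbs_ineq {H : Type*} [Fintype H] [Nonempty H] (a b : H → ℝ)
    (ha : ∀ h, 0 < a h) (hb : ∀ h, 0 < b h) :
    (∑ h, (a h / ∑ h', a h') * Real.log (b h)) -
      (∑ h, (a h / ∑ h', a h') * Real.log (a h))
      ≤ Real.log (∑ h, b h) - Real.log (∑ h, a h) := by
  set S : ℝ := ∑ h', a h' with hS
  have hSpos : 0 < S := Finset.sum_pos (fun h _ => ha h) Finset.univ_nonempty
  have hTpos : 0 < ∑ h, b h := Finset.sum_pos (fun h _ => hb h) Finset.univ_nonempty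
  have key : ∑ h, (a h / S) * Real.log (b h / a h)
      ≤ Real.log (∑ h, (a h / S) * (b h / a h)) := by
    have := ConcaveOn.le_map_sum (strictConcaveOn_log_Ioi.concaveOn)
      (t := Finset.univ) (w := fun h => a h / S) (p := fun h => b h / a h)
      (fun h _ => div_nonneg (ha h).le hSpos.le)
      (by rw [← Finset.sum_div]; field_simp; exact hS.symm)
      (fun h _ => div_pos (hb h) (ha h))
    simpa [smul_eq_mul] using this
  have h1 : ∀ h, (a h / S) * (b h / a h) = b h / S := by
    intro h
    rw [div_mul_div_comm, mul_comm (a h) (b h), mul_div_mul_right _ _ (ha h).ne']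
  have h2 : ∑ h, (a h / S) * (b h / a h) = (∑ h, b h) / S := by
    simp_rw [h1]; rw [Finset.sum_div]
  rw [h2, Real.log_div hTpos.ne' hSpos.ne'] at key
  calc (∑ h, (a h / S) * Real.log (b h)) - (∑ h, (a h / S) * Real.log (a h))
      = ∑ h, (a h / S) * Real.log (b h / a h) := by
        rw [← Finset.sum_sub_distrib]
        refine Finset.sum_congr rfl fun h _ => ?_
        rw [Real.log_div (hb h).ne' (ha h).ne']; ring
    _ ≤ _ := key

/-- Ascent property of the modified EM algorithm: with
`l₁(Θ) = ∑ u, log (∑ h, q Θ u h)`, `l_mp = l₁ - l₂`, and E-step objective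
`Q(Θ | Θ') = ∑ u ∑ h, (q Θ' u h / ∑ h', q Θ' u h') * log (q Θ u h)`,
if `Q(Θ'' | Θ') - l₂(Θ'') ≥ Q(Θ' | Θ') - l₂(Θ')` then
`l_mp(Θ'') ≥ l_mp(Θ')`; consequently the modified EM iterates produce a
nondecreasing sequence of `l_mp` values. -/
theorem modified_em_ascent {U H : Type*} [Fintype U] [Fintype H] [Nonempty H]
    (k : ℕ) (q : (Fin k → ℝ) → U → H → ℝ)
    (hq : ∀ Θ u h, 0 < q Θ u h) (l₂ : (Fin k → ℝ) → ℝ) :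
    (∀ Θ' Θ'' : Fin k → ℝ,
      (∑ u, ∑ h, (q Θ' u h / ∑ h', q Θ' u h') * Real.log (q Θ'' u h)) - l₂ Θ''
        ≥ (∑ u, ∑ h, (q Θ' u h / ∑ h', q Θ' u h') * Real.log (q Θ' u h)) - l₂ Θ' →
      (∑ u, Real.log (∑ h, q Θ'' u h)) - l₂ Θ''
        ≥ (∑ u, Real.log (∑ h, q Θ' u h)) - l₂ Θ') ∧
    (∀ Θseq : ℕ → (Fin k → ℝ),
      (∀ r : ℕ,
        (∑ u, ∑ h, (q (Θseq r) u h / ∑ h', q (Θseq r) u h') *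
            Real.log (q (Θseq (r + 1)) u h)) - l₂ (Θseq (r + 1))
          ≥ (∑ u, ∑ h, (q (Θseq r) u h / ∑ h', q (Θseq r) u h') *
              Real.log (q (Θseq r) u h)) - l₂ (Θseq r)) →
      Monotone fun r => (∑ u, Real.log (∑ h, q (Θseq r) u h)) - l₂ (Θseq r)) := by
  have main : ∀ Θ' Θ'' : Fin k → ℝ,
      (∑ u, ∑ h, (q Θ' u h / ∑ h', q Θ' u h') * Real.log (q Θ'' u h)) - l₂ Θ''
        ≥ (∑ u, ∑ h, (q Θ' u h / ∑ h', q Θ' u h') * Real.log (q Θ' u h)) - l₂ Θ' →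
      (∑ u, Real.log (∑ h, q Θ'' u h)) - l₂ Θ''
        ≥ (∑ u, Real.log (∑ h, q Θ' u h)) - l₂ Θ' := by
    intro Θ' Θ'' hQ
    have hsum : (∑ u, ∑ h, (q Θ' u h / ∑ h', q Θ' u h') * Real.log (q Θ'' u h)) -
        (∑ u, ∑ h, (q Θ' u h / ∑ h', q Θ' u h') * Real.log (q Θ' u h))
        ≤ (∑ u, Real.log (∑ h, q Θ'' u h)) - (∑ u, Real.log (∑ h, q Θ' u h)) := by
      rw [← Finset.sum_sub_distrib, ← Finset.sum_sub_distrib]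
      exact Finset.sum_le_sum fun u _ =>
        gibbs_ineq (q Θ' u) (q Θ'' u) (hq Θ' u) (hq Θ'' u)
    linarith
  refine ⟨main, fun Θseq hstep => monotone_nat_of_le_succ fun r => ?_⟩
  exact main (Θseq r) (Θseq (r + 1)) (hstep r)
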